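/- arXiv:1809.04935 — 5 statements merged into one kernel-verified Lean document; each statement's English description precedes it below -/
import Mathlib

section
/- A ring R is s-unital (i.e., x ∈ xR ∩ Rx for each x in R) if and only if for every positive integer n and elements s_1, ..., s_n in R there exists f in R such that f·s_i = s_i·f = s_i for all 1 ≤ i ≤ n. -/
private lemma leftUnit {R : Type*} [NonUnitalRing R]
    (h : ∀ x : R, ∃ y : R, x = y * x) (l : List R) :
    ∃ e : R, ∀ x ∈ l, e * x = x := by
  induction l with
  | nil => exact ⟨0, by simp⟩
  | cons a l ih =>
    obtain ⟨e, he⟩ := ih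
    obtain ⟨f, hf⟩ := h (a - e * a)
    refine ⟨e + f - f * e, ?_⟩
    intro x hx
    rcases List.mem_cons.mp hx with rfl | hx
    · have : f * (x - e * x) = x - e * x := hf.symm
      have := this
      calc (e + f - f * e) * x = e * x + (f * x - f * (e * x)) := by noncomm_ring
        _ = e * x + f * (x - e * x) := by rw [mul_sub]
        _ = e * x + (x - e * x) := by rw [← hf]
        _ = x := by noncomm_ring
    · have hex := he x hx
      calc (e + f - f * e) * x = e * x + f * x - f * (e * x) := by noncomm_ring
        _ = x := by rw [hex]; abel

private lemma rightUnit {R : Type*} [NonUnitalRing R]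
    (h : ∀ x : R, ∃ y : R, x = x * y) (l : List R) :
    ∃ e : R, ∀ x ∈ l, x * e = x := by
  induction l with
  | nil => exact ⟨0, by simp⟩
  | cons a l ih =>
    obtain ⟨e, he⟩ := ih
    obtain ⟨f, hf⟩ := h (a - a * e)
    refine ⟨e + f - e * f, ?_⟩
    intro x hx
    rcases List.mem_cons.mp hx with rfl | hx
    · calc x * (e + f - e * f) = x * e + (x * f - (x * e) * f) := by noncomm_ring
        _ = x * e + (x - x * e) * f := by rw [sub_mul]
        _ = x * e + (x - x * e) := by rw [← hf]
        _ = x := by noncomm_ring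
    · have hex := he x hx
      calc x * (e + f - e * f) = x * e + x * f - (x * e) * f := by noncomm_ring
        _ = x := by rw [hex]; abel

/-- A ring `R` is s-unital (`x ∈ xR ∩ Rx` for every `x`) iff for every finite family
`s_1, …, s_n` of elements of `R` there is a common local unit `f`. -/
theorem stmt5 {R : Type*} [NonUnitalRing R] :
    (∀ x : R, (∃ y : R, x = x * y) ∧ (∃ y : R, x = y * x)) ↔
    (∀ n : ℕ, 0 < n → ∀ s : Fin n → R,
      ∃ f : R, ∀ i : Fin n, f * s i = s i ∧ s i * f = s i) := by
  constructor
  · intro h n _ s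
    obtain ⟨e, he⟩ := leftUnit (fun x => (h x).2) (List.ofFn s)
    obtain ⟨f, hf⟩ := rightUnit (fun x => (h x).1) (List.ofFn s)
    refine ⟨e + f - f * e, fun i => ?_⟩
    have hmem : s i ∈ List.ofFn s := List.mem_ofFn.mpr ⟨i, rfl⟩
    have h1 := he (s i) hmem
    have h2 := hf (s i) hmem
    constructor
    · have key : (e + f - f * e) * s i = e * s i + f * s i - f * (e * s i) := by
        noncomm_ring
      rw [key, h1]; abel
    · have key : s i * (e + f - f * e) = s i * e + s i * f - (s i * f) * e := by
        noncomm_ring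
      rw [key, h2]; abel
  · intro h x
    obtain ⟨f, hf⟩ := h 1 one_pos (fun _ => x)
    obtain ⟨h1, h2⟩ := hf 0
    exact ⟨⟨f, h2.symm⟩, ⟨f, h1.symm⟩⟩
end

section
/- If S is an epsilon-strongly G-graded ring, then S is unital with multiplicative identity element ε_e, and S_e is a unital subring of S. -/
/-- The additive subgroup generated by all products `u * v` with `u ∈ U`, `v ∈ V`. -/
def mulSub {S : Type*} [NonUnitalRing S] (U V : AddSubgroup S) : AddSubgroup S :=
  AddSubgroup.closure (Set.image2 (· * ·) (U : Set S) (V : Set S))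

/-- `comp` is a `G`-grading of the ring `S`: the components form an internal direct sum
and `S_g S_h ⊆ S_{gh}`. -/
def IsGrading {G : Type*} [Group G] [DecidableEq G] {S : Type*} [NonUnitalRing S]
    (comp : G → AddSubgroup S) : Prop :=
  DirectSum.IsInternal comp ∧
    ∀ g h : G, ∀ a ∈ comp g, ∀ b ∈ comp h, a * b ∈ comp (g * h)

/-- The grading `comp` is epsilon-strong: for every `g` there are `ε_g ∈ S_g S_{g⁻¹}` and
`ε'_g ∈ S_{g⁻¹} S_g` with `ε_g s = s = s ε'_g` for all `s ∈ S_g`. -/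
def EpsilonStrong {G : Type*} [Group G] {S : Type*} [NonUnitalRing S]
    (comp : G → AddSubgroup S) : Prop :=
  ∀ g : G, ∃ ε ∈ mulSub (comp g) (comp g⁻¹), ∃ ε' ∈ mulSub (comp g⁻¹) (comp g),
    ∀ s ∈ comp g, ε * s = s ∧ s * ε' = s

/-- The component `S_C = ⊕_{g ∈ C} S_g` of the induced `G/N`-grading. -/
def indComp {G : Type*} [Group G] {S : Type*} [NonUnitalRing S]
    (comp : G → AddSubgroup S) (N : Subgroup G) (C : G ⧸ N) : AddSubgroup S :=
  ⨆ g : {g : G // (g : G ⧸ N) = C}, comp g.1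

/-- `S_g S_h ⊆ S_{gh}`. -/
lemma mulSub_le {G : Type*} [Group G] [DecidableEq G] {S : Type*} [NonUnitalRing S]
    {comp : G → AddSubgroup S} (hgr : IsGrading comp) (g h : G) :
    mulSub (comp g) (comp h) ≤ comp (g * h) := by
  apply AddSubgroup.closure_le (comp (g * h)) |>.mpr
  rintro x ⟨a, ha, b, hb, rfl⟩
  exact hgr.2 g h a ha b hb

/-- If `S` is epsilon-strongly `G`-graded, then `S` is unital with multiplicative identity
`ε_e ∈ S_e S_e ⊆ S_e`; in particular `S_e` is a unital subring of `S`. -/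
theorem stmt6 {G : Type*} [Group G] [DecidableEq G] {S : Type*} [NonUnitalRing S]
    (comp : G → AddSubgroup S) (hgr : IsGrading comp) (hes : EpsilonStrong comp) :
    ∃ one : S, one ∈ mulSub (comp (1 : G)) (comp (1 : G)) ∧ one ∈ comp (1 : G) ∧
      ∀ x : S, one * x = x ∧ x * one = x := by
  obtain ⟨ε, hε, ε', hε', h1⟩ := hes 1
  rw [inv_one] at hε hε'
  have hεe : ε ∈ comp 1 := by simpa using mulSub_le hgr 1 1 hε
  have hε'e : ε' ∈ comp 1 := by simpa using mulSub_le hgr 1 1 hε'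
  -- ε is a left identity and ε' a right identity on every homogeneous component
  have hom : ∀ g : G, ∀ s ∈ comp g, ε * s = s ∧ s * ε' = s := by
    intro g s hs
    obtain ⟨εg, hεg, εg', hεg', hg⟩ := hes g
    have hεge : εg ∈ comp 1 := by simpa using mulSub_le hgr g g⁻¹ hεg
    have hεg'e : εg' ∈ comp 1 := by simpa using mulSub_le hgr g⁻¹ g hεg'
    constructor
    · calc ε * s = ε * (εg * s) := by rw [(hg s hs).1]
        _ = (ε * εg) * s := (mul_assoc ..).symm
        _ = εg * s := by rw [(h1 εg hεge).1]
        _ = s := (hg s hs).1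
    · calc s * ε' = (s * εg') * ε' := by rw [(hg s hs).2]
        _ = s * (εg' * ε') := mul_assoc ..
        _ = s * εg' := by rw [(h1 εg' hεg'e).2]
        _ = s := (hg s hs).2
  -- extend to all of S by the direct sum decomposition
  have hall : ∀ x : S, ε * x = x ∧ x * ε' = x := by
    intro x
    obtain ⟨d, rfl⟩ := hgr.1.2 x
    induction d using DirectSum.induction_on with
    | zero => simp
    | of g a =>
        rw [DirectSum.coeAddMonoidHom_of]
        exact hom g a.1 a.2
    | add u v hu hv =>
        rw [map_add, mul_add, add_mul, hu.1, hv.1, hu.2, hv.2]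
        exact ⟨rfl, rfl⟩
  have : ε = ε' := by rw [← (hall ε').1, (hall ε).2]
  refine ⟨ε, hε, hεe, fun x => ⟨(hall x).1, ?_⟩⟩
  rw [this]; exact (hall x).2
end

section
/- Let φ: A → B be a surjective G-graded ring homomorphism of G-graded rings. If A is epsilon-strongly G-graded, then B is epsilon-strongly G-graded. -/
theorem mulSub_map {A B : Type*} [NonUnitalRing A] [NonUnitalRing B]
    (φ : A →ₙ+* B) {U V : AddSubgroup A} {U' V' : AddSubgroup B}
    (hU : ∀ a ∈ U, φ a ∈ U') (hV : ∀ a ∈ V, φ a ∈ V')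
    {x : A} (hx : x ∈ mulSub U V) : φ x ∈ mulSub U' V' := by
  induction hx using AddSubgroup.closure_induction with
  | mem y hy =>
    obtain ⟨u, hu, v, hv, rfl⟩ := hy
    exact AddSubgroup.subset_closure ⟨φ u, hU u hu, φ v, hV v hv, (map_mul φ u v).symm⟩
  | zero => simpa using (mulSub U' V').zero_mem
  | add a b _ _ ha hb => simpa using (mulSub U' V').add_mem ha hb
  | neg a _ ha => simpa using (mulSub U' V').neg_mem ha

theorem comp_surj {G : Type*} [DecidableEq G]
    {A B : Type*} [NonUnitalRing A] [NonUnitalRing B]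
    (compA : G → AddSubgroup A) (compB : G → AddSubgroup B)
    (hA : DirectSum.IsInternal compA) (hB : DirectSum.IsInternal compB)
    (φ : A →ₙ+* B) (hsurj : Function.Surjective φ)
    (hgraded : ∀ g : G, ∀ a ∈ compA g, φ a ∈ compB g)
    (g : G) (b : B) (hb : b ∈ compB g) : ∃ a ∈ compA g, φ a = b := by
  obtain ⟨a, rfl⟩ := hsurj b
  obtain ⟨x, rfl⟩ := hA.surjective a
  set ψ : ∀ i : G, compA i →+ compB i := fun i =>
    AddMonoidHom.codRestrict ((φ : A →+ B).comp (compA i).subtype) (compB i)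
      (fun a => hgraded i a a.2) with hψ
  set F : DirectSum G (fun i => compA i) →+ DirectSum G (fun i => compB i) := DFinsupp.mapRange.addMonoidHom ψ with hF
  have hcomm : (DirectSum.coeAddMonoidHom compB).comp F
      = (φ : A →+ B).comp (DirectSum.coeAddMonoidHom compA) := by
    refine DirectSum.addHom_ext fun i y => ?_
    have hFof : F (DirectSum.of (fun i => compA i) i y)
        = DirectSum.of (fun i => compB i) i (ψ i y) := DFinsupp.mapRange_single (hf := fun i => (ψ i).map_zero)
    simp only [AddMonoidHom.comp_apply, hFof, DirectSum.coeAddMonoidHom_of]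
    rfl
  have h1 : DirectSum.coeAddMonoidHom compB (F x) = φ (DirectSum.coeAddMonoidHom compA x) :=
    DFunLike.congr_fun hcomm x
  have h2 : DirectSum.coeAddMonoidHom compB
      (DirectSum.of (fun i => compB i) g ⟨_, hb⟩) = φ (DirectSum.coeAddMonoidHom compA x) :=
    DirectSum.coeAddMonoidHom_of _ _ _
  have h3 := hB.injective (h1.trans h2.symm)
  have h4 := DFunLike.congr_fun h3 g
  have h5 : (F x) g = ψ g (x g) := DFinsupp.mapRange_apply _ (fun i => (ψ i).map_zero) x g
  rw [h5, DirectSum.of_eq_same] at h4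
  refine ⟨x g, (x g).2, ?_⟩
  exact congrArg Subtype.val h4

theorem stmt8' {G : Type*} [Group G] [DecidableEq G]
    {A B : Type*} [NonUnitalRing A] [NonUnitalRing B]
    (compA : G → AddSubgroup A) (compB : G → AddSubgroup B)
    (hA : DirectSum.IsInternal compA) (hB : DirectSum.IsInternal compB)
    (φ : A →ₙ+* B) (hsurj : Function.Surjective φ)
    (hgraded : ∀ g : G, ∀ a ∈ compA g, φ a ∈ compB g)
    (hes : ∀ g : G, ∃ ε ∈ mulSub (compA g) (compA g⁻¹), ∃ ε' ∈ mulSub (compA g⁻¹) (compA g),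
      ∀ s ∈ compA g, ε * s = s ∧ s * ε' = s) :
    ∀ g : G, ∃ ε ∈ mulSub (compB g) (compB g⁻¹), ∃ ε' ∈ mulSub (compB g⁻¹) (compB g),
      ∀ s ∈ compB g, ε * s = s ∧ s * ε' = s := by
  intro g
  obtain ⟨ε, hε, ε', hε', h⟩ := hes g
  refine ⟨φ ε, mulSub_map φ (hgraded g) (hgraded g⁻¹) hε,
    φ ε', mulSub_map φ (hgraded g⁻¹) (hgraded g) hε', fun s hs => ?_⟩
  obtain ⟨a, ha, rfl⟩ := comp_surj compA compB hA hB φ hsurj hgraded g s hs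
  obtain ⟨h1, h2⟩ := h a ha
  constructor
  · rw [← map_mul, h1]
  · rw [← map_mul, h2]

/-- If `φ : A → B` is a surjective `G`-graded ring homomorphism and `A` is epsilon-strongly
`G`-graded, then `B` is epsilon-strongly `G`-graded. -/
theorem stmt8 {G : Type*} [Group G] [DecidableEq G]
    {A B : Type*} [NonUnitalRing A] [NonUnitalRing B]
    (compA : G → AddSubgroup A) (compB : G → AddSubgroup B)
    (hA : IsGrading compA) (hB : IsGrading compB)
    (φ : A →ₙ+* B) (hsurj : Function.Surjective φ)
    (hgraded : ∀ g : G, ∀ a ∈ compA g, φ a ∈ compB g)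
    (hes : EpsilonStrong compA) :
    EpsilonStrong compB :=
  stmt8' compA compB hA.1 hB.1 φ hsurj hgraded hes
end

section
/- Let N be a normal subgroup of G and S a nearly epsilon-strongly G-graded ring. Then the induced G/N-grading of S is nearly epsilon-strong: for every coset C ∈ G/N and every s ∈ S_C, there exist e ∈ S_C S_{C^{-1}} and e' ∈ S_{C^{-1}} S_C such that e·s = s = s·e'. -/
theorem mem_mulSub {S : Type*} [NonUnitalRing S] {U V : AddSubgroup S} {u v : S}
    (hu : u ∈ U) (hv : v ∈ V) : u * v ∈ mulSub U V :=
  AddSubgroup.subset_closure ⟨u, hu, v, hv, rfl⟩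

theorem mulSub_le_s11 {S : Type*} [NonUnitalRing S] {U V : AddSubgroup S} {W : AddSubgroup S}
    (h : ∀ u ∈ U, ∀ v ∈ V, u * v ∈ W) : mulSub U V ≤ W := by
  apply (AddSubgroup.closure_le _).mpr
  rintro x ⟨u, hu, v, hv, rfl⟩
  exact h u hu v hv

theorem mulSub_mono {S : Type*} [NonUnitalRing S] {U V U' V' : AddSubgroup S}
    (hU : U ≤ U') (hV : V ≤ V') : mulSub U V ≤ mulSub U' V' :=
  mulSub_le_s11 fun _ hu _ hv => mem_mulSub (hU hu) (hV hv)

theorem mulSub_mul_mem {S : Type*} [NonUnitalRing S] {U V : AddSubgroup S} {c x : S}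
    (hc : ∀ v ∈ V, v * c ∈ V) (hx : x ∈ mulSub U V) : x * c ∈ mulSub U V := by
  induction hx using AddSubgroup.closure_induction with
  | mem y hy =>
    obtain ⟨u, hu, v, hv, rfl⟩ := hy
    rw [mul_assoc]
    exact mem_mulSub hu (hc v hv)
  | zero => simpa using zero_mem _
  | add a b _ _ ha hb => rw [add_mul]; exact add_mem ha hb
  | neg a _ ha => rw [neg_mul]; exact neg_mem ha

theorem mul_mulSub_mem {S : Type*} [NonUnitalRing S] {U V : AddSubgroup S} {c x : S}
    (hc : ∀ u ∈ U, c * u ∈ U) (hx : x ∈ mulSub U V) : c * x ∈ mulSub U V := by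
  induction hx using AddSubgroup.closure_induction with
  | mem y hy =>
    obtain ⟨u, hu, v, hv, rfl⟩ := hy
    rw [← mul_assoc]
    exact mem_mulSub (hc u hu) hv
  | zero => simpa using zero_mem _
  | add a b _ _ ha hb => rw [mul_add]; exact add_mem ha hb
  | neg a _ ha => rw [mul_neg]; exact neg_mem ha

/-- If `S` is nearly epsilon-strongly `G`-graded and `N ◃ G`, then the induced `G/N`-grading
is nearly epsilon-strong. -/
theorem stmt11 {G : Type*} [Group G] [DecidableEq G] {S : Type*} [NonUnitalRing S]
    (comp : G → AddSubgroup S) (hgr : IsGrading comp)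
    (hnes : ∀ g : G, ∀ s ∈ comp g, ∃ e ∈ mulSub (comp g) (comp g⁻¹),
      ∃ e' ∈ mulSub (comp g⁻¹) (comp g), e * s = s ∧ s * e' = s)
    (N : Subgroup G) [N.Normal] :
    ∀ C : G ⧸ N, ∀ s ∈ indComp comp N C,
      ∃ e ∈ mulSub (indComp comp N C) (indComp comp N C⁻¹),
        ∃ e' ∈ mulSub (indComp comp N C⁻¹) (indComp comp N C),
          e * s = s ∧ s * e' = s := by
  obtain ⟨-, hmul⟩ := hgr
  intro C s hs
  set A := mulSub (indComp comp N C) (indComp comp N C⁻¹) with hA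
  set A' := mulSub (indComp comp N C⁻¹) (indComp comp N C) with hA'
  have hcomp_le : ∀ (D : G ⧸ N) (g : G), (g : G ⧸ N) = D → comp g ≤ indComp comp N D :=
    fun D g hg => le_iSup (fun g : {g : G // (g : G ⧸ N) = D} => comp g.1) ⟨g, hg⟩
  have hinv : ∀ g : G, (g : G ⧸ N) = C → ((g⁻¹ : G) : G ⧸ N) = C⁻¹ := by
    intro g hg; rw [← hg]; rfl
  -- left units
  have left : ∀ s ∈ indComp comp N C, ∀ e1, e1 ∈ A → e1 ∈ comp (1 : G) →
      ∃ e, e ∈ A ∧ e ∈ comp (1 : G) ∧ e * s = s ∧ ∀ x : S, e1 * x = x → e * x = x := by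
    intro s hs
    have hs' : s ∈ ⨆ g : {g : G // (g : G ⧸ N) = C}, comp g.1 := hs
    clear hs
    refine AddSubgroup.iSup_induction (G := S) _ hs'
      (C := fun x => ∀ e1, e1 ∈ A → e1 ∈ comp (1 : G) →
        ∃ e, e ∈ A ∧ e ∈ comp (1 : G) ∧ e * x = x ∧ ∀ t : S, e1 * t = t → e * t = t)
      ?_ ?_ ?_
    · rintro ⟨g, hg⟩ x hx e1 he1A he1c
      have hx' : x - e1 * x ∈ comp g := by
        refine sub_mem hx ?_
        have := hmul 1 g e1 he1c x hx
        rwa [one_mul] at this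
      obtain ⟨f, hf, f', hf', hfe⟩ := hnes g (x - e1 * x) hx'
      have hfe := hfe.1
      have hfA : f ∈ A := mulSub_mono (hcomp_le C g hg) (hcomp_le C⁻¹ g⁻¹ (hinv g hg)) hf
      have hf1 : f ∈ comp (1 : G) := by
        refine mulSub_le_s11 (fun a ha b hb => ?_) hf
        have := hmul g g⁻¹ a ha b hb
        rwa [mul_inv_cancel] at this
      have hfe1 : f * e1 ∈ mulSub (comp g) (comp g⁻¹) := by
        refine mulSub_mul_mem (fun v hv => ?_) hf
        have := hmul g⁻¹ 1 v hv e1 he1c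
        rwa [mul_one] at this
      have hfe1A : f * e1 ∈ A :=
        mulSub_mono (hcomp_le C g hg) (hcomp_le C⁻¹ g⁻¹ (hinv g hg)) hfe1
      have hfe1c : f * e1 ∈ comp (1 : G) := by
        have := hmul 1 1 f hf1 e1 he1c
        rwa [mul_one] at this
      refine ⟨e1 + (f - f * e1), add_mem he1A (sub_mem hfA hfe1A),
        add_mem he1c (sub_mem hf1 hfe1c), ?_, ?_⟩
      · have key : f * x - f * (e1 * x) = x - e1 * x := by rw [← mul_sub]; exact hfe
        calc (e1 + (f - f * e1)) * x
            = e1 * x + (f * x - f * (e1 * x)) := by noncomm_ring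
          _ = e1 * x + (x - e1 * x) := by rw [key]
          _ = x := by abel
      · intro t ht
        calc (e1 + (f - f * e1)) * t
            = e1 * t + (f * t - f * (e1 * t)) := by noncomm_ring
          _ = t := by rw [ht]; abel
    · intro e1 he1A he1c
      exact ⟨e1, he1A, he1c, by simp, fun x hx => hx⟩
    · intro x y hx hy e1 he1A he1c
      obtain ⟨e2, he2A, he2c, he2x, he2p⟩ := hx e1 he1A he1c
      obtain ⟨e3, he3A, he3c, he3y, he3p⟩ := hy e2 he2A he2c
      refine ⟨e3, he3A, he3c, ?_, fun t ht => he3p t (he2p t ht)⟩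
      rw [mul_add, he3y, he3p x he2x]
  -- right units
  have right : ∀ s ∈ indComp comp N C, ∀ e1, e1 ∈ A' → e1 ∈ comp (1 : G) →
      ∃ e, e ∈ A' ∧ e ∈ comp (1 : G) ∧ s * e = s ∧ ∀ x : S, x * e1 = x → x * e = x := by
    intro s hs
    have hs' : s ∈ ⨆ g : {g : G // (g : G ⧸ N) = C}, comp g.1 := hs
    clear hs
    refine AddSubgroup.iSup_induction (G := S) _ hs'
      (C := fun x => ∀ e1, e1 ∈ A' → e1 ∈ comp (1 : G) →
        ∃ e, e ∈ A' ∧ e ∈ comp (1 : G) ∧ x * e = x ∧ ∀ t : S, t * e1 = t → t * e = t)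
      ?_ ?_ ?_
    · rintro ⟨g, hg⟩ x hx e1 he1A he1c
      have hx' : x - x * e1 ∈ comp g := by
        refine sub_mem hx ?_
        have := hmul g 1 x hx e1 he1c
        rwa [mul_one] at this
      obtain ⟨f, hf, f', hf', hfe⟩ := hnes g (x - x * e1) hx'
      have hfe := hfe.2
      have hfA : f' ∈ A' := mulSub_mono (hcomp_le C⁻¹ g⁻¹ (hinv g hg)) (hcomp_le C g hg) hf'
      have hf1 : f' ∈ comp (1 : G) := by
        refine mulSub_le_s11 (fun a ha b hb => ?_) hf'
        have := hmul g⁻¹ g a ha b hb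
        rwa [inv_mul_cancel] at this
      have hfe1 : e1 * f' ∈ mulSub (comp g⁻¹) (comp g) := by
        refine mul_mulSub_mem (fun u hu => ?_) hf'
        have := hmul 1 g⁻¹ e1 he1c u hu
        rwa [one_mul] at this
      have hfe1A : e1 * f' ∈ A' :=
        mulSub_mono (hcomp_le C⁻¹ g⁻¹ (hinv g hg)) (hcomp_le C g hg) hfe1
      have hfe1c : e1 * f' ∈ comp (1 : G) := by
        have := hmul 1 1 e1 he1c f' hf1
        rwa [mul_one] at this
      refine ⟨e1 + (f' - e1 * f'), add_mem he1A (sub_mem hfA hfe1A),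
        add_mem he1c (sub_mem hf1 hfe1c), ?_, ?_⟩
      · have key : x * f' - (x * e1) * f' = x - x * e1 := by rw [← sub_mul]; exact hfe
        calc x * (e1 + (f' - e1 * f'))
            = x * e1 + (x * f' - (x * e1) * f') := by noncomm_ring
          _ = x * e1 + (x - x * e1) := by rw [key]
          _ = x := by abel
      · intro t ht
        calc t * (e1 + (f' - e1 * f'))
            = t * e1 + (t * f' - (t * e1) * f') := by noncomm_ring
          _ = t := by rw [ht]; abel
    · intro e1 he1A he1c
      exact ⟨e1, he1A, he1c, by simp, fun x hx => hx⟩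
    · intro x y hx hy e1 he1A he1c
      obtain ⟨e2, he2A, he2c, he2x, he2p⟩ := hx e1 he1A he1c
      obtain ⟨e3, he3A, he3c, he3y, he3p⟩ := hy e2 he2A he2c
      refine ⟨e3, he3A, he3c, ?_, fun t ht => he3p t (he2p t ht)⟩
      rw [add_mul, he3y, he3p x he2x]
  obtain ⟨e, heA, -, hes, -⟩ := left s hs 0 (zero_mem _) (zero_mem _)
  obtain ⟨e', he'A, -, hse, -⟩ := right s hs 0 (zero_mem _) (zero_mem _)
  exact ⟨e, heA, e', he'A, hes, hse⟩
end

section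
/- Consider the partial action of Z on R = ∏_Z Q given by D_0 = R, D_i = e_i R for i ≠ 0 (e_i the Kronecker delta sequence), with α_i : D_{-i} → D_i defined by (α_i f)(i) = f(-i). The induced Z/2Z-grading of the partial skew group ring R ⋆_α Z, with components S_0 = ⊕_n D_{2n} δ_{2n} and S_1 = ⊕_n D_{2n+1} δ_{2n+1}, is not epsilon-strong: the ring S_1 S_1 has no multiplicative identity element. -/
open scoped Classical

noncomputable section

/-- The base ring `R = ∏_ℤ ℚ`. -/
abbrev Rr : Type := ℤ → ℚ

/-- The underlying additive group of the partial skew group ring `R ⋆_α ℤ = ⊕_n D_n δ_n`,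
realized as finitely supported functions `ℤ → R`. -/
abbrev Aa : Type := Π₀ _ : ℤ, Rr

/-- `1_g`, the identity of the ideal `D_g`: `D_0 = R` and `D_g = e_g R` for `g ≠ 0`,
where `e_g` is the Kronecker delta sequence. -/
def oneD (g : ℤ) : Rr := if g = 0 then (fun _ => 1) else (fun i => if i = g then 1 else 0)

/-- The partial action: `α_0 = id` and, for `g ≠ 0`, `α_g : D_{-g} → D_g` is given by
`(α_g f)(g) = f (-g)` (and `0` elsewhere). -/
def alpha (g : ℤ) (f : Rr) : Rr :=
  if g = 0 then f else fun i => if i = g then f (-g) else 0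

/-- The multiplication of the partial skew group ring:
`(a δ_g)(b δ_h) = a α_g(b 1_{-g}) δ_{g+h}`. -/
def mulA (x y : Aa) : Aa :=
  x.sum fun g a => y.sum fun h b => DFinsupp.single (g + h) (a * alpha g (b * oneD (-g)))

/-- The odd component `S_1 = ⊕_n D_{2n+1} δ_{2n+1}` of the induced `ℤ/2ℤ`-grading. -/
def S1 : AddSubgroup Aa :=
  AddSubgroup.closure
    {x | ∃ (n : ℤ) (a : Rr), ¬ Even n ∧ (∀ j : ℤ, j ≠ n → a j = 0) ∧
      x = DFinsupp.single n a}

/-- The ring `S_1 S_1` (the additive group generated by products of elements of `S_1`). -/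
def S1S1 : AddSubgroup Aa :=
  AddSubgroup.closure (Set.image2 mulA (S1 : Set Aa) (S1 : Set Aa))



/- ### auxiliary lemmas -/

lemma alpha_zero_right (g : ℤ) : alpha g (0 : Rr) = 0 := by
  unfold alpha; split_ifs <;> [rfl; (funext i; simp)]

lemma alpha_add (g : ℤ) (f f' : Rr) : alpha g (f + f') = alpha g f + alpha g f' := by
  unfold alpha; split_ifs with h
  · rfl
  · funext i; by_cases hi : i = g <;> simp [hi]

lemma mulA_single_single (n m : ℤ) (a b : Rr) :
    mulA (DFinsupp.single n a) (DFinsupp.single m b) =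
      DFinsupp.single (n + m) (a * alpha n (b * oneD (-n))) := by
  unfold mulA
  rw [DFinsupp.sum_single_index, DFinsupp.sum_single_index]
  · rw [show (0 : Rr) * oneD (-n) = 0 from zero_mul _, alpha_zero_right, mul_zero,
      DFinsupp.single_zero]
  · rw [DFinsupp.sum_single_index] <;>
      simp [alpha_zero_right, DFinsupp.single_zero, zero_mul, mul_zero]

lemma mulA_zero_left (y : Aa) : mulA 0 y = 0 := DFinsupp.sum_zero_index

lemma mulA_zero_right (x : Aa) : mulA x 0 = 0 := by
  unfold mulA
  simp [DFinsupp.sum_zero_index, DFinsupp.sum_zero]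

lemma mulA_add_left (x x' y : Aa) : mulA (x + x') y = mulA x y + mulA x' y := by
  unfold mulA
  rw [DFinsupp.sum_add_index]
  · intro g; simp
  · intro g a a'
    rw [← DFinsupp.sum_add]
    congr 1; funext h b
    rw [add_mul, DFinsupp.single_add]

lemma mulA_add_right (x y y' : Aa) : mulA x (y + y') = mulA x y + mulA x y' := by
  unfold mulA
  rw [← DFinsupp.sum_add]
  congr 1; funext g a
  rw [DFinsupp.sum_add_index]
  · intro h
    rw [show (0 : Rr) * oneD (-g) = 0 from zero_mul _, alpha_zero_right, mul_zero,
      DFinsupp.single_zero]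
  · intro h b b'
    rw [add_mul, alpha_add, mul_add, DFinsupp.single_add]

lemma mulA_neg_left (x y : Aa) : mulA (-x) y = -(mulA x y) := by
  have h : mulA x y + mulA (-x) y = 0 := by
    rw [← mulA_add_left, add_neg_cancel, mulA_zero_left]
  exact eq_neg_of_add_eq_zero_right h

lemma mulA_neg_right (x y : Aa) : mulA x (-y) = -(mulA x y) := by
  have h : mulA x y + mulA x (-y) = 0 := by
    rw [← mulA_add_right, add_neg_cancel, mulA_zero_right]
  exact eq_neg_of_add_eq_zero_right h

/-- The subgroup of elements whose `0`–component has finite support. -/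
def Tt : AddSubgroup Aa where
  carrier := {x | (Function.support (x 0)).Finite}
  zero_mem' := by simp
  add_mem' := by
    intro x y hx hy
    refine (hx.union hy).subset ?_
    have : (x + y) 0 = x 0 + y 0 := DFinsupp.add_apply x y 0
    rw [Set.mem_setOf_eq] at *
    rw [this]
    exact Function.support_add _ _
  neg_mem' := by
    intro x hx
    have : (-x) 0 = -(x 0) := DFinsupp.neg_apply x 0
    simpa [Set.mem_setOf_eq, this] using hx


/-- the Kronecker delta sequence -/
def eg (g : ℤ) : Rr := fun i => if i = g then 1 else 0

lemma gen_mem_T {n m : ℤ} {a b : Rr} (hn : ¬ Even n) (ha : ∀ j : ℤ, j ≠ n → a j = 0) :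
    mulA (DFinsupp.single n a) (DFinsupp.single m b) ∈ Tt := by
  rw [mulA_single_single]
  show (Function.support ((DFinsupp.single (n + m)
      (a * alpha n (b * oneD (-n))) : Aa) 0)).Finite
  by_cases h : n + m = 0
  · rw [h, DFinsupp.single_eq_same]
    refine (Set.finite_singleton n).subset ?_
    intro j hj
    by_contra hjn
    exact hj (by show a j * _ = 0; rw [ha j hjn, zero_mul])
  · rw [DFinsupp.single_eq_of_ne (Ne.symm h)]
    simp


lemma S1S1_le_T : S1S1 ≤ Tt := by
  rw [S1S1, AddSubgroup.closure_le]
  rintro z ⟨x, hx, y, hy, rfl⟩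
  revert y hy
  refine AddSubgroup.closure_induction (k := _)
    (p := fun x _ => ∀ y, y ∈ S1 → mulA x y ∈ Tt) ?_ ?_ ?_ ?_ hx
  · rintro x ⟨n, a, hn, ha, rfl⟩ y hy
    refine AddSubgroup.closure_induction (k := _)
      (p := fun y _ => mulA (DFinsupp.single n a) y ∈ Tt) ?_ ?_ ?_ ?_ hy
    · rintro y ⟨m, b, hm, hb, rfl⟩
      exact gen_mem_T hn ha
    · show mulA (DFinsupp.single n a) 0 ∈ Tt
      rw [mulA_zero_right]; exact Tt.zero_mem
    · intro y y' _ _ h1 h2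
      show mulA (DFinsupp.single n a) (y + y') ∈ Tt
      rw [mulA_add_right]; exact Tt.add_mem h1 h2
    · intro y _ h1
      show mulA (DFinsupp.single n a) (-y) ∈ Tt
      rw [mulA_neg_right]; exact Tt.neg_mem h1
  · intro y _
    show mulA 0 y ∈ Tt
    rw [mulA_zero_left]; exact Tt.zero_mem
  · intro x x' _ _ h1 h2 y hy
    show mulA (x + x') y ∈ Tt
    rw [mulA_add_left]; exact Tt.add_mem (h1 y hy) (h2 y hy)
  · intro x _ h1 y hy
    show mulA (-x) y ∈ Tt
    rw [mulA_neg_left]; exact Tt.neg_mem (h1 y hy)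

lemma eg_mul_eg (g : ℤ) (hg : g ≠ 0) :
    eg g * alpha g (eg (-g) * oneD (-g)) = eg g := by
  funext i
  show eg g i * alpha g (eg (-g) * oneD (-g)) i = eg g i
  unfold alpha oneD eg
  rw [if_neg hg, if_neg (neg_ne_zero.mpr hg)]
  by_cases h : i = g <;> simp [h]

lemma single_mem_S1 (g : ℤ) (hg : ¬ Even g) : (DFinsupp.single g (eg g) : Aa) ∈ S1 :=
  AddSubgroup.subset_closure ⟨g, eg g, hg, fun j hj => if_neg hj, rfl⟩

lemma zg_mem_S1S1 (g : ℤ) (hg : ¬ Even g) :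
    (DFinsupp.single (0 : ℤ) (eg g) : Aa) ∈ S1S1 := by
  have hg0 : g ≠ 0 := fun h => hg (h ▸ Even.zero)
  have key : mulA (DFinsupp.single g (eg g)) (DFinsupp.single (-g) (eg (-g)))
      = DFinsupp.single (0 : ℤ) (eg g) := by
    rw [mulA_single_single, add_neg_cancel, eg_mul_eg g hg0]
  rw [← key]
  exact AddSubgroup.subset_closure
    ⟨_, single_mem_S1 g hg, _, single_mem_S1 (-g) (by simpa using hg), rfl⟩

lemma eval_right (g : ℤ) (one : Aa) :
    (mulA (DFinsupp.single (0 : ℤ) (eg g)) one) 0 = eg g * one 0 := by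
  unfold mulA
  rw [DFinsupp.sum_single_index]
  · have hs : ∀ (h : ℤ) (b : Rr), eg g * alpha 0 (b * oneD (-0)) = eg g * b := by
      intro h b
      congr 1
      show alpha 0 (b * oneD 0) = b
      unfold alpha oneD
      rw [if_pos rfl, if_pos rfl]
      funext i; show b i * 1 = b i; rw [mul_one]
    rw [DFinsupp.sum_apply]
    have : (one.sum fun h b => (DFinsupp.single (0 + h) (eg g * alpha 0 (b * oneD (-0))) : Aa) 0)
        = one.sum fun h b => if h = 0 then eg g * b else 0 := by
      congr 1; funext h b
      rw [hs h b, zero_add]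
      by_cases hh : h = 0
      · rw [hh, DFinsupp.single_eq_same, if_pos rfl]
      · rw [DFinsupp.single_eq_of_ne (Ne.symm hh), if_neg hh]
    rw [this]
    show (∑ h ∈ one.support, if h = 0 then eg g * one h else 0) = _
    rw [Finset.sum_ite_eq' one.support (0 : ℤ) (fun h => eg g * one h)]
    split_ifs with h
    · rfl
    · rw [DFinsupp.notMem_support_iff.mp h, mul_zero]
  · simp

/-- The induced `ℤ/2ℤ`-grading of `R ⋆_α ℤ` is not epsilon-strong: the ring `S_1 S_1` has
no multiplicative identity element. -/
theorem stmt18 :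
    ¬ ∃ one ∈ S1S1, ∀ z ∈ S1S1, mulA one z = z ∧ mulA z one = z := by
  rintro ⟨one, hone, hunit⟩
  have hT : (Function.support (one 0)).Finite := S1S1_le_T hone
  have key : ∀ g : ℤ, ¬ Even g → one 0 g = 1 := by
    intro g hg
    have hz := (hunit _ (zg_mem_S1S1 g hg)).2
    have h0 : eg g * one 0 = eg g := by
      rw [← eval_right g one, hz, DFinsupp.single_eq_same]
    have := congrFun h0 g
    simpa [eg] using this
  have hinj : Function.Injective (fun n : ℕ => (2 * n + 1 : ℤ)) := by
    intro a b hab; simpa using hab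
  have hinf : (Function.support (one 0)).Infinite := by
    refine Set.Infinite.mono ?_ (Set.infinite_range_of_injective hinj)
    rintro g ⟨n, rfl⟩
    have hodd : ¬ Even (2 * (n : ℤ) + 1) := by
      simp [Int.even_add_one, parity_simps]
    simp only [Function.mem_support]
    rw [key _ hodd]; norm_num
  exact hinf hT

end
end
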